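/- M^[2](d, n) ≤ ⌈n/2⌉ + 2d − 3 whenever 3 ≤ d ≤ ⌊n/2⌋ − 1: there is an adaptive strategy using tests of size exactly 2 that identifies the d defectives among n items in at most ⌈n/2⌉ + 2d − 3 tests in the worst case. -/

import Mathlib

/-- An adaptive group-testing strategy on a population of `n` items:
a binary decision tree whose internal nodes test a subset (branching on
contaminated / pure) and whose leaves output a guess for the defective set. -/
inductive GTTree (n : ℕ) : Type where
  | leaf (guess : Finset (Fin n)) : GTTree n
  | node (test : Finset (Fin n)) (pos neg : GTTree n) : GTTree n

/-- Run the strategy when the true defective set is `D`. -/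
def GTTree.run {n : ℕ} (D : Finset (Fin n)) : GTTree n → Finset (Fin n)
  | .leaf g => g
  | .node t p q => if (t ∩ D).Nonempty then p.run D else q.run D

/-- Worst-case number of tests performed by the strategy. -/
def GTTree.depth {n : ℕ} : GTTree n → ℕ
  | .leaf _ => 0
  | .node _ p q => max p.depth q.depth + 1

/-- The strategy correctly identifies every possible defective set of size `d`. -/
def GTTree.Solves {n : ℕ} (T : GTTree n) (d : ℕ) : Prop :=
  ∀ D : Finset (Fin n), D.card = d → T.run D = D

/-- Every test set occurring in the tree has size exactly `k`. -/
def GTTree.SizeK {n : ℕ} (k : ℕ) : GTTree n → Prop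
  | .leaf _ => True
  | .node t p q => t.card = k ∧ p.SizeK k ∧ q.SizeK k

/-- `M d n`: optimal worst-case number of adaptive tests to find the `d`
defectives among `n` items, test sets of arbitrary size (`⊤` if unsolvable). -/
noncomputable def M (d n : ℕ) : ℕ∞ :=
  sInf {c : ℕ∞ | ∃ T : GTTree n, T.Solves d ∧ (T.depth : ℕ∞) = c}

/-- `Mfix k d n`: optimal worst-case number of adaptive tests to find the `d`
defectives among `n` items, every test set of size exactly `k` (`⊤` if unsolvable). -/
noncomputable def Mfix (k d n : ℕ) : ℕ∞ :=
  sInf {c : ℕ∞ | ∃ T : GTTree n, T.SizeK k ∧ T.Solves d ∧ (T.depth : ℕ∞) = c}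

namespace GT
variable {n : ℕ}

def probeList (u : Fin n) : List (Fin n) → (Finset (Fin n) → GTTree n) → GTTree n
  | [], k => k ∅
  | x :: l, k => .node {u, x} (probeList u l (fun s => k (insert x s))) (probeList u l k)

theorem probeList_depth (u : Fin n) (l : List (Fin n)) (k : Finset (Fin n) → GTTree n)
    (c : ℕ) (hk : ∀ s, (k s).depth ≤ c) : (probeList u l k).depth ≤ l.length + c := by
  induction l generalizing k with
  | nil => simpa [probeList] using hk ∅
  | cons x l ih =>
    simp only [probeList, GTTree.depth, List.length_cons]
    have h1 := ih (fun s => k (insert x s)) (fun s => hk _)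
    have h2 := ih k hk
    omega

theorem probeList_sizeK (u : Fin n) (l : List (Fin n)) (k : Finset (Fin n) → GTTree n)
    (hu : ∀ x ∈ l, x ≠ u) (hk : ∀ s, (k s).SizeK 2) : (probeList u l k).SizeK 2 := by
  induction l generalizing k with
  | nil => exact hk ∅
  | cons x l ih =>
    refine ⟨?_, ih _ (fun y hy => hu y (by simp [hy])) (fun s => hk _),
      ih _ (fun y hy => hu y (by simp [hy])) hk⟩
    rw [Finset.card_pair (Ne.symm (hu x (by simp)))]

theorem probeList_run (u : Fin n) (l : List (Fin n)) (k : Finset (Fin n) → GTTree n)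
    (D : Finset (Fin n)) (hu : u ∉ D) :
    (probeList u l k).run D = (k (l.toFinset ∩ D)).run D := by
  induction l generalizing k with
  | nil => simp [probeList]
  | cons x l ih =>
    simp only [probeList, GTTree.run]
    have hiff : ({u, x} ∩ D).Nonempty ↔ x ∈ D := by
      constructor
      · rintro ⟨y, hy⟩
        simp only [Finset.mem_inter, Finset.mem_insert, Finset.mem_singleton] at hy
        rcases hy with ⟨(rfl | rfl), hyD⟩
        · exact absurd hyD hu
        · exact hyD
      · intro h; exact ⟨x, by simp [h]⟩
    by_cases hx : x ∈ D
    · rw [if_pos (hiff.2 hx), ih]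
      congr 2
      ext y
      simp only [Finset.mem_inter, Finset.mem_insert, List.toFinset_cons, List.mem_toFinset]
      constructor
      · rintro (rfl | ⟨h1, h2⟩)
        · exact ⟨Or.inl rfl, hx⟩
        · exact ⟨Or.inr h1, h2⟩
      · rintro ⟨(rfl | h1), h2⟩
        · exact Or.inl rfl
        · exact Or.inr ⟨h1, h2⟩
    · rw [if_neg (fun h => hx (hiff.1 h)), ih]
      congr 2
      ext y
      simp only [Finset.mem_inter, List.toFinset_cons, List.mem_toFinset, Finset.mem_insert]
      constructor
      · rintro ⟨h1, h2⟩; exact ⟨Or.inr h1, h2⟩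
      · rintro ⟨(rfl | h1), h2⟩
        · exact absurd h2 hx
        · exact ⟨h1, h2⟩

def probeTests : List (Finset (Fin n)) → (List Bool → GTTree n) → GTTree n
  | [], k => k []
  | t :: ts, k => .node t (probeTests ts (fun o => k (true :: o)))
      (probeTests ts (fun o => k (false :: o)))

theorem probeTests_depth (ts : List (Finset (Fin n))) (k : List Bool → GTTree n)
    (c : ℕ) (hk : ∀ o, o.length = ts.length → (k o).depth ≤ c) :
    (probeTests ts k).depth ≤ ts.length + c := by
  induction ts generalizing k with
  | nil => simpa [probeTests] using hk [] rfl
  | cons t ts ih =>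
    simp only [probeTests, GTTree.depth, List.length_cons]
    have h1 := ih (fun o => k (true :: o)) (fun o ho => hk _ (by simp [ho]))
    have h2 := ih (fun o => k (false :: o)) (fun o ho => hk _ (by simp [ho]))
    omega

theorem probeTests_sizeK (ts : List (Finset (Fin n))) (k : List Bool → GTTree n)
    (ht : ∀ t ∈ ts, t.card = 2) (hk : ∀ o, o.length = ts.length → (k o).SizeK 2) :
    (probeTests ts k).SizeK 2 := by
  induction ts generalizing k with
  | nil => exact hk [] rfl
  | cons t ts ih =>
    exact ⟨ht t (by simp), ih _ (fun s hs => ht s (by simp [hs])) (fun o ho => hk _ (by simp [ho])),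
      ih _ (fun s hs => ht s (by simp [hs])) (fun o ho => hk _ (by simp [ho]))⟩

theorem probeTests_run (ts : List (Finset (Fin n))) (k : List Bool → GTTree n)
    (D : Finset (Fin n)) :
    (probeTests ts k).run D = (k (ts.map (fun t => decide (t ∩ D).Nonempty))).run D := by
  induction ts generalizing k with
  | nil => simp [probeTests]
  | cons t ts ih =>
    simp only [probeTests, GTTree.run, List.map_cons]
    by_cases h : (t ∩ D).Nonempty
    · rw [if_pos h, ih]; simp [h]
    · rw [if_neg h, ih]; simp [h]

/-! ### The strategy -/

def em (n : ℕ) (hn : 0 < n) (j : ℕ) : Fin n := ⟨j % n, Nat.mod_lt _ hn⟩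

theorem em_val (hn : 0 < n) {j : ℕ} (h : j < n) : (em n hn j).val = j := Nat.mod_eq_of_lt h

theorem em_inj (hn : 0 < n) {j j' : ℕ} (h : j < n) (h' : j' < n) (hne : j ≠ j') :
    em n hn j ≠ em n hn j' := by
  intro he
  apply hne
  have := congrArg Fin.val he
  rwa [em_val hn h, em_val hn h'] at this

def tests (n : ℕ) (hn : 0 < n) : List (Finset (Fin n)) :=
  (List.range (n/2)).map (fun i => {em n hn (2*i), em n hn (2*i+1)})

def Sof (o : List Bool) : List ℕ := (List.range o.length).filter (fun i => o.getD i false)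

def i0of (o : List Bool) : ℕ := List.findIdx (fun b => b = false) o

def LB (n : ℕ) (hn : 0 < n) (S : List ℕ) : List (Fin n) :=
  (if 2*(n/2) < n then [em n hn (2*(n/2))] else []) ++
  (S.dropLast.flatMap (fun i => [em n hn (2*i), em n hn (2*i+1)])) ++
  [em n hn (2*(S.getLastD 0))]

def phase2 (n d : ℕ) (hn : 0 < n) (o : List Bool) : GTTree n :=
  if i0of o < o.length ∧ 0 < (Sof o).length ∧ (Sof o).length ≤ d then
    if (Sof o).length = d then
      probeList (em n hn (2*(i0of o))) ((Sof o).map (fun i => em n hn (2*i)))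
        (fun s => .leaf (s ∪ (((Sof o).filter (fun i => em n hn (2*i) ∉ s)).map
          (fun i => em n hn (2*i+1))).toFinset))
    else
      probeList (em n hn (2*(i0of o))) (LB n hn (Sof o))
        (fun s => .leaf (if s.card < d then insert (em n hn (2*((Sof o).getLastD 0)+1)) s else s))
  else .leaf ∅

def strat (n d : ℕ) (hn : 0 < n) : GTTree n := probeTests (tests n hn) (phase2 n d hn)

theorem length_flatMap_pairs (l : List ℕ) (f g : ℕ → Fin n) :
    (l.flatMap (fun i => [f i, g i])).length = 2 * l.length := by
  induction l with
  | nil => simp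
  | cons x l ih => simp [List.flatMap_cons, ih]; omega

theorem strat_depth (hn : 0 < n) (d : ℕ) (h3 : 3 ≤ d) :
    (strat n d hn).depth ≤ n/2 + ((if 2*(n/2) < n then 1 else 0) + (2*d - 3)) := by
  have hlen : (tests n hn).length = n/2 := by simp [tests]
  rw [strat]
  refine le_trans (probeTests_depth _ _ ((if 2*(n/2) < n then 1 else 0)+(2*d-3)) ?_)
    (by rw [hlen])
  intro o ho
  rw [phase2]
  split
  · rename_i hcond
    obtain ⟨h1, h2, h3'⟩ := hcond
    split
    · rename_i hpd
      refine le_trans (probeList_depth _ _ _ 0 (fun s => Nat.le_refl _)) ?_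
      simp only [List.length_map, hpd]
      split <;> omega
    · rename_i hpd
      refine le_trans (probeList_depth _ _ _ 0 (fun s => Nat.le_refl _)) ?_
      have hL : (LB n hn (Sof o)).length =
          (if 2*(n/2) < n then 1 else 0) + (2 * ((Sof o).length - 1) + 1) := by
        rw [LB]
        split <;>
          simp only [List.length_append, List.length_cons, List.length_nil,
            length_flatMap_pairs, List.length_dropLast] <;> omega
      rw [hL, Nat.add_zero]
      split <;> omega
  · simp [GTTree.depth]

theorem mem_Sof {o : List Bool} {i : ℕ} : i ∈ Sof o ↔ i < o.length ∧ o.getD i false = true := by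
  simp [Sof, List.mem_filter, List.mem_range]

theorem getD_i0of {o : List Bool} (h : i0of o < o.length) : o.getD (i0of o) false = false := by
  unfold i0of at h ⊢
  rw [List.getD_eq_getElem _ _ h]
  have := List.findIdx_getElem (w := h)
  exact of_decide_eq_true this

theorem getLastD_mem {S : List ℕ} (h : S ≠ []) : S.getLastD 0 ∈ S := by
  rw [List.getLastD_eq_getLast? , List.getLast?_eq_getLast h]
  exact List.getLast_mem h

theorem Sof_ne_nil {o : List Bool} (h : 0 < (Sof o).length) : Sof o ≠ [] :=
  List.ne_nil_of_length_pos h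

theorem strat_sizeK (hn : 0 < n) (d : ℕ) : (strat n d hn).SizeK 2 := by
  rw [strat]
  apply probeTests_sizeK
  · intro t ht
    rw [tests] at ht
    simp only [List.mem_map, List.mem_range] at ht
    obtain ⟨i, hi, rfl⟩ := ht
    exact Finset.card_pair (em_inj hn (by omega) (by omega) (by omega))
  · intro o ho
    have hm : o.length = n/2 := by simpa [tests] using ho
    rw [phase2]
    split
    · rename_i hcond
      obtain ⟨h1, h2, h3'⟩ := hcond
      have hi0 : o.getD (i0of o) false = false := getD_i0of h1
      have key : ∀ i ∈ Sof o, em n hn (2*i) ≠ em n hn (2*(i0of o)) ∧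
          em n hn (2*i+1) ≠ em n hn (2*(i0of o)) := by
        intro i hi
        rw [mem_Sof] at hi
        have hne : i ≠ i0of o := by
          intro h; rw [h, hi0] at hi; exact absurd hi.2 (by simp)
        have hi' : i < n/2 := hm ▸ hi.1
        have hio : i0of o < n/2 := hm ▸ h1
        exact ⟨em_inj hn (by omega) (by omega) (by omega),
          em_inj hn (by omega) (by omega) (by omega)⟩
      split
      · apply probeList_sizeK
        · intro x hx
          simp only [List.mem_map] at hx
          obtain ⟨i, hi, rfl⟩ := hx
          exact (key i hi).1
        · intro s; trivial
      · apply probeList_sizeK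
        · intro x hx
          rw [LB] at hx
          simp only [List.mem_append, List.mem_singleton] at hx
          rcases hx with ((hx | hx) | hx)
          · split at hx
            · rename_i hodd
              simp only [List.mem_singleton] at hx
              subst hx
              have hio : i0of o < n/2 := hm ▸ h1
              exact em_inj hn (by omega) (by omega) (by omega)
            · simp at hx
          · simp only [List.mem_flatMap, List.mem_cons, List.not_mem_nil, or_false] at hx
            obtain ⟨i, hi, (rfl | rfl)⟩ := hx
            · exact (key i (List.dropLast_subset _ hi)).1
            · exact (key i (List.dropLast_subset _ hi)).2
          · subst hx
            exact (key _ (getLastD_mem (Sof_ne_nil h2))).1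
        · intro s; split <;> trivial
    · trivial

theorem strat_solves (hn : 0 < n) (d : ℕ) (h3 : 3 ≤ d) (hd : d ≤ n / 2 - 1) :
    (strat n d hn).Solves d := by
  intro D hD
  rw [strat, probeTests_run]
  set o : List Bool := (tests n hn).map (fun t => decide (t ∩ D).Nonempty) with hodef
  have hm : o.length = n/2 := by simp [hodef, tests]
  have hm4 : 4 ≤ n/2 := by omega
  -- getD description
  have hgetD : ∀ i, i < n/2 → o.getD i false =
      decide (({em n hn (2*i), em n hn (2*i+1)} : Finset (Fin n)) ∩ D).Nonempty := by
    intro i hi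
    rw [List.getD_eq_getElem _ _ (by omega : i < o.length)]
    simp only [hodef, tests, List.map_map, List.getElem_map, List.getElem_range]
    rfl
  have hS : ∀ i, i ∈ Sof o ↔ i < n/2 ∧
      (({em n hn (2*i), em n hn (2*i+1)} : Finset (Fin n)) ∩ D).Nonempty := by
    intro i
    rw [mem_Sof, hm]
    constructor
    · rintro ⟨hi, hg⟩
      rw [hgetD i hi] at hg
      exact ⟨hi, of_decide_eq_true hg⟩
    · rintro ⟨hi, hg⟩
      exact ⟨hi, by rw [hgetD i hi]; exact decide_eq_true hg⟩
  -- nodup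
  have hnd : (Sof o).Nodup := List.Nodup.filter _ List.nodup_range
  -- witness function
  have hw : ∀ i : ℕ, ∃ x : Fin n, i ∈ Sof o → x ∈ D ∧ (x.val = 2*i ∨ x.val = 2*i+1) := by
    intro i
    by_cases hi : i ∈ Sof o
    · obtain ⟨him, ⟨y, hy⟩⟩ := (hS i).1 hi
      refine ⟨y, fun _ => ?_⟩
      simp only [Finset.mem_inter, Finset.mem_insert, Finset.mem_singleton] at hy
      refine ⟨hy.2, ?_⟩
      rcases hy.1 with rfl | rfl
      · left; exact em_val hn (by omega)
      · right; exact em_val hn (by omega)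
    · exact ⟨em n hn 0, fun h => absurd h hi⟩
  choose g hg using hw
  have hginj : Set.InjOn g ((Sof o).toFinset : Set ℕ) := by
    intro i hi i' hi' he
    simp only [Finset.coe_mem, List.coe_toFinset, Set.mem_setOf_eq] at hi hi'
    obtain ⟨-, hv⟩ := hg i hi
    obtain ⟨-, hv'⟩ := hg i' hi'
    rw [he] at hv
    omega
  have hgD : ∀ i ∈ (Sof o).toFinset, g i ∈ D := by
    intro i hi
    exact (hg i (List.mem_toFinset.mp hi)).1
  have hcardF : (Sof o).toFinset.card = (Sof o).length := by
    rw [List.toFinset_card_of_nodup hnd]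
  have hpd : (Sof o).length ≤ d := by
    rw [← hcardF, ← hD]
    exact Finset.card_le_card_of_injOn g hgD hginj
  -- pure pair exists
  have h1 : i0of o < o.length := by
    apply List.findIdx_lt_length_of_exists
    by_contra hall
    push_neg at hall
    have : Sof o = List.range o.length := by
      apply List.filter_eq_self.mpr
      intro i hi
      have hilt : i < o.length := List.mem_range.mp hi
      have hmem : o.getD i false ∈ o := by
        rw [List.getD_eq_getElem _ _ hilt]
        exact List.getElem_mem _
      have h2' := hall _ hmem
      simpa using h2'

    rw [this, List.length_range] at hpd
    omega
  -- covering
  have hcover : ∀ x : Fin n, x ∈ D →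
      (∃ i ∈ Sof o, x = em n hn (2*i) ∨ x = em n hn (2*i+1)) ∨
      (2*(n/2) < n ∧ x = em n hn (2*(n/2))) := by
    intro x hx
    have hxn : x.val < n := x.isLt
    by_cases hlt : x.val < 2*(n/2)
    · left
      have hxe : x = em n hn (2*(x.val/2)) ∨ x = em n hn (2*(x.val/2)+1) := by
        rcases Nat.even_or_odd x.val with ⟨k, hk⟩ | ⟨k, hk⟩
        · left; apply Fin.ext; rw [em_val hn (by omega)]; omega
        · right; apply Fin.ext; rw [em_val hn (by omega)]; omega
      refine ⟨x.val/2, ?_, hxe⟩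
      rw [hS]
      refine ⟨by omega, ⟨x, ?_⟩⟩
      simp only [Finset.mem_inter, Finset.mem_insert, Finset.mem_singleton]
      exact ⟨hxe, hx⟩
    · right
      have hxv : x.val = 2*(n/2) := by omega
      exact ⟨by omega, Fin.ext (by rw [em_val hn (by omega)]; exact hxv)⟩
  -- at least one contaminated pair
  have h2 : 0 < (Sof o).length := by
    by_contra hz
    push_neg at hz
    have hSnil : Sof o = [] := List.length_eq_zero_iff.mp (by omega)
    have hsub : D ⊆ {em n hn (2*(n/2))} := by
      intro x hx
      rcases hcover x hx with ⟨i, hi, -⟩ | ⟨-, rfl⟩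
      · rw [hSnil] at hi; exact absurd hi List.not_mem_nil
      · exact Finset.mem_singleton_self _
    have := Finset.card_le_card hsub
    rw [hD, Finset.card_singleton] at this
    omega
  -- u is pure
  have hu : em n hn (2*(i0of o)) ∉ D := by
    intro hmem
    have hi0 : o.getD (i0of o) false = false := getD_i0of h1
    rw [hgetD (i0of o) (by omega)] at hi0
    have : (({em n hn (2*(i0of o)), em n hn (2*(i0of o)+1)} : Finset (Fin n)) ∩ D).Nonempty :=
      ⟨em n hn (2*(i0of o)), by simp [hmem]⟩
    simp [this] at hi0
  rw [phase2, if_pos ⟨h1, h2, hpd⟩]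
  by_cases hpeq : (Sof o).length = d
  · rw [if_pos hpeq, probeList_run _ _ _ D hu]
    simp only [GTTree.run]
    -- the image of g is all of D
    have himg : (Sof o).toFinset.image g = D := by
      apply Finset.eq_of_subset_of_card_le
      · intro x hx
        obtain ⟨j, hj, rfl⟩ := Finset.mem_image.mp hx
        exact hgD j hj
      · rw [Finset.card_image_of_injOn hginj, hcardF, hpeq, hD]
    have hmemD : ∀ x ∈ D, ∃ j ∈ Sof o, g j = x := by
      intro x hx
      obtain ⟨j, hj, hje⟩ := Finset.mem_image.mp (himg ▸ hx)
      exact ⟨j, List.mem_toFinset.mp hj, hje⟩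
    have hone : ∀ i ∈ Sof o, ¬(em n hn (2*i) ∈ D ∧ em n hn (2*i+1) ∈ D) := by
      rintro i hi ⟨ha, hb⟩
      have hilt : i < n/2 := ((hS i).1 hi).1
      obtain ⟨j, hj, hje⟩ := hmemD _ ha
      obtain ⟨j', hj', hje'⟩ := hmemD _ hb
      have hv := (hg j hj).2
      have hv' := (hg j' hj').2
      rw [hje, em_val hn (by omega)] at hv
      rw [hje', em_val hn (by omega)] at hv'
      have hji : j = i := by omega
      have hji' : j' = i := by omega
      rw [hji] at hje; rw [hji'] at hje'
      have : em n hn (2*i) = em n hn (2*i+1) := by rw [← hje, ← hje']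
      exact em_inj hn (by omega) (by omega) (by omega) this
    have hleft : ¬(2*(n/2) < n ∧ em n hn (2*(n/2)) ∈ D) := by
      rintro ⟨hodd, hmem⟩
      obtain ⟨j, hj, hje⟩ := hmemD _ hmem
      have hjlt : j < n/2 := ((hS j).1 hj).1
      have hv := (hg j hj).2
      rw [hje, em_val hn (by omega)] at hv
      omega
    ext x
    simp only [Finset.mem_union, Finset.mem_inter, List.mem_toFinset, List.mem_map,
      List.mem_filter, decide_eq_true_eq]
    constructor
    · rintro (⟨-, hxD⟩ | ⟨i, ⟨hiS, hdec⟩, rfl⟩)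
      · exact hxD
      · have hilt : i < n/2 := ((hS i).1 hiS).1
        have hnotD : em n hn (2*i) ∉ D := by
          intro hcon
          exact hdec ⟨⟨i, hiS, rfl⟩, hcon⟩
        obtain ⟨hgiD, hv⟩ := hg i hiS
        rcases hv with hv | hv
        · exact absurd (show g i = em n hn (2*i) from Fin.ext (by rw [em_val hn (by omega)]; exact hv)) 
            (fun he => hnotD (he ▸ hgiD))
        · have : g i = em n hn (2*i+1) := Fin.ext (by rw [em_val hn (by omega)]; exact hv)
          exact this ▸ hgiD
    · intro hxD
      rcases hcover x hxD with ⟨i, hiS, (rfl | rfl)⟩ | ⟨hodd, rfl⟩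
      · exact Or.inl ⟨⟨i, hiS, rfl⟩, hxD⟩
      · have hilt : i < n/2 := ((hS i).1 hiS).1
        by_cases hem : em n hn (2*i) ∈ D
        · exact absurd ⟨hem, hxD⟩ (hone i hiS)
        · refine Or.inr ⟨i, ⟨hiS, ?_⟩, rfl⟩
          intro hcon
          exact hem hcon.2
      · exact absurd ⟨hodd, hxD⟩ hleft
  · rw [if_neg hpeq, probeList_run _ _ _ D hu]
    simp only [GTTree.run]
    have hSne : Sof o ≠ [] := Sof_ne_nil h2
    have hlastS : (Sof o).getLastD 0 ∈ Sof o := getLastD_mem hSne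
    have hlastlt : (Sof o).getLastD 0 < n/2 := ((hS _).1 hlastS).1
    have hSplit : (Sof o).dropLast ++ [(Sof o).getLastD 0] = Sof o := by
      rw [List.getLastD_eq_getLast?, List.getLast?_eq_getLast hSne]
      exact List.dropLast_append_getLast hSne
    have hdl : ∀ i ∈ (Sof o).dropLast, i ≠ (Sof o).getLastD 0 := by
      intro i hi he
      have hnd' : ((Sof o).dropLast ++ [(Sof o).getLastD 0]).Nodup := by rw [hSplit]; exact hnd
      exact (List.nodup_append'.mp hnd').2.2 hi (by simp [he])
    have hdlS : ∀ i ∈ (Sof o).dropLast, i ∈ Sof o := fun i hi => List.dropLast_subset _ hi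
    have hLBmem : ∀ x : Fin n, x ∈ LB n hn (Sof o) ↔
        ((2*(n/2) < n ∧ x = em n hn (2*(n/2))) ∨
        (∃ i ∈ (Sof o).dropLast, x = em n hn (2*i) ∨ x = em n hn (2*i+1)) ∨
        x = em n hn (2*((Sof o).getLastD 0))) := by
      intro x
      by_cases hodd : 2*(n/2) < n <;>
        simp [LB, hodd, List.mem_flatMap] <;> tauto
    have hbnotin : em n hn (2*((Sof o).getLastD 0)+1) ∉ (LB n hn (Sof o)).toFinset := by
      rw [List.mem_toFinset, hLBmem]
      rintro (⟨hodd, he⟩ | ⟨i, hi, (he | he)⟩ | he)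
      · exact em_inj hn (by omega) (by omega) (by omega) he
      · have := ((hS i).1 (hdlS i hi)).1
        exact em_inj hn (by omega) (by omega) (by omega) he
      · have := ((hS i).1 (hdlS i hi)).1
        have := hdl i hi
        exact em_inj hn (by omega) (by omega) (by omega) he
      · exact em_inj hn (by omega) (by omega) (by omega) he
    have hDsub : ∀ x ∈ D, x ∈ (LB n hn (Sof o)).toFinset ∨ x = em n hn (2*((Sof o).getLastD 0)+1) := by
      intro x hx
      rcases hcover x hx with ⟨i, hiS, hxe⟩ | ⟨hodd, rfl⟩
      · have : i ∈ (Sof o).dropLast ∨ i = (Sof o).getLastD 0 := by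
          have : i ∈ (Sof o).dropLast ++ [(Sof o).getLastD 0] := by rw [hSplit]; exact hiS
          simpa using this
        rcases this with hi | rfl
        · left; rw [List.mem_toFinset, hLBmem]; exact Or.inr (Or.inl ⟨i, hi, hxe⟩)
        · rcases hxe with rfl | rfl
          · left; rw [List.mem_toFinset, hLBmem]; exact Or.inr (Or.inr rfl)
          · right; rfl
      · left; rw [List.mem_toFinset, hLBmem]; exact Or.inl ⟨hodd, rfl⟩
    by_cases hb : em n hn (2*((Sof o).getLastD 0)+1) ∈ D
    · have hDeq : D = insert (em n hn (2*((Sof o).getLastD 0)+1))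
          ((LB n hn (Sof o)).toFinset ∩ D) := by
        ext x
        constructor
        · intro hx
          rcases hDsub x hx with h | rfl
          · exact Finset.mem_insert_of_mem (Finset.mem_inter.mpr ⟨h, hx⟩)
          · exact Finset.mem_insert_self _ _
        · intro hx
          rcases Finset.mem_insert.mp hx with rfl | hx
          · exact hb
          · exact (Finset.mem_inter.mp hx).2
      have hbs : em n hn (2*((Sof o).getLastD 0)+1) ∉ (LB n hn (Sof o)).toFinset ∩ D :=
        fun h => hbnotin (Finset.mem_inter.mp h).1
      have hscard : ((LB n hn (Sof o)).toFinset ∩ D).card = d - 1 := by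
        rw [hDeq, Finset.card_insert_of_notMem hbs] at hD
        omega
      rw [if_pos (by omega : ((LB n hn (Sof o)).toFinset ∩ D).card < d)]
      exact hDeq.symm
    · have hDeq : D = (LB n hn (Sof o)).toFinset ∩ D := by
        apply Finset.Subset.antisymm
        · intro x hx
          rcases hDsub x hx with h | rfl
          · exact Finset.mem_inter.mpr ⟨h, hx⟩
          · exact absurd hx hb
        · exact Finset.inter_subset_right
      rw [if_neg (by rw [← hDeq, hD]; omega)]
      exact hDeq.symm


theorem ceil_half (n : ℕ) : ⌈(n : ℚ)/2⌉₊ = (n+1)/2 := by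
  rcases Nat.even_or_odd n with ⟨k, hk⟩ | ⟨k, hk⟩
  · subst hk
    rw [show ((k+k : ℕ) : ℚ)/2 = ((k:ℕ):ℚ) by push_cast; ring, Nat.ceil_natCast]
    omega
  · subst hk
    rw [show (2*k+1+1)/2 = k+1 by omega, Nat.ceil_eq_iff (by omega)]
    push_cast
    constructor <;> [skip; skip] <;> nlinarith [ (0:ℚ) ≤ 1 ]

end GT

theorem stmt18 (d n : ℕ) (h3 : 3 ≤ d) (hd : d ≤ n / 2 - 1) :
    Mfix 2 d n ≤ ((⌈(n : ℚ) / 2⌉₊ + 2 * d - 3 : ℕ) : ℕ∞) := by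
  have hn : 0 < n := by omega
  have hmem : ((GT.strat n d hn).depth : ℕ∞) ∈
      {c : ℕ∞ | ∃ T : GTTree n, T.SizeK 2 ∧ T.Solves d ∧ (T.depth : ℕ∞) = c} :=
    ⟨GT.strat n d hn, GT.strat_sizeK hn d, GT.strat_solves hn d h3 hd, rfl⟩
  refine le_trans (sInf_le hmem) ?_
  rw [Nat.cast_le]
  refine le_trans (GT.strat_depth hn d h3) ?_
  rw [GT.ceil_half]
  split <;> omega
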